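/- Twisted reflection formula for short roots: let R be a finite reduced irreducible crystallographic root system with positive roots R₊ (type G₂ is allowed). Then for every dominant weight λ and every short positive root α (i.e., α ∈ R₊ with (α,α) = min{(γ,γ) : γ ∈ R}), one has n^ν(λ, s_α) = (λ, α∨). -/

import Mathlib

open scoped RealInnerProductSpace

/-- A finite reduced irreducible crystallographic root system in a real inner
product space `V`. -/
structure IsRootSystem {V : Type*} [NormedAddCommGroup V] [InnerProductSpace ℝ V]
    (R : Set V) : Prop where
  finite : R.Finite
  span_top : Submodule.span ℝ R = ⊤
  ne_zero : ∀ α ∈ R, α ≠ (0 : V)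
  reflect_mem : ∀ α ∈ R, ∀ β ∈ R, β - (2 * ⟪β, α⟫ / ⟪α, α⟫) • α ∈ R
  integral : ∀ α ∈ R, ∀ β ∈ R, ∃ k : ℤ, 2 * ⟪β, α⟫ / ⟪α, α⟫ = (k : ℝ)
  reduced : ∀ α ∈ R, ∀ c : ℝ, c • α ∈ R → c = 1 ∨ c = -1
  irreducible : ¬ ∃ R₁ R₂ : Set V, R₁.Nonempty ∧ R₂.Nonempty ∧ R = R₁ ∪ R₂ ∧
    ∀ α ∈ R₁, ∀ β ∈ R₂, ⟪α, β⟫ = 0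

/-- The set of positive roots determined by a linear functional `f` nonvanishing
on the roots. -/
def posRoots {V : Type*} [NormedAddCommGroup V] [InnerProductSpace ℝ V]
    (R : Set V) (f : V →ₗ[ℝ] ℝ) : Set V :=
  {α | α ∈ R ∧ 0 < f α}

/-- The set of twisted weights `ν_{β₁} + ⋯ + ν_{β_M}` over decompositions of `μ`
into positive roots (with repetitions), where `ν_β = (β,β)/m₀` and `m₀` is the
minimal squared root length.  A decomposition is encoded as a list of pairs
`(β, ν_β)`. -/
def twistedDecompWeights {V : Type*} [NormedAddCommGroup V] [InnerProductSpace ℝ V]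
    (P : Set V) (m₀ : ℝ) (μ : V) : Set ℕ :=
  {N | ∃ l : List (V × ℕ),
    (∀ p ∈ l, p.1 ∈ P ∧ ⟪p.1, p.1⟫ = (p.2 : ℝ) * m₀) ∧
    (l.map Prod.fst).sum = μ ∧ (l.map Prod.snd).sum = N}

/-- Twisted reflection formula for short roots: for every dominant weight `λ` and
every short positive root `α` (type `G₂` allowed), `n^ν(λ, s_α) = (λ, α∨)`;
here `λ - s_α(λ) = (λ,α∨) • α`. -/
theorem twisted_reflection_formula_short {V : Type*} [NormedAddCommGroup V]
    [InnerProductSpace ℝ V] [FiniteDimensional ℝ V]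
    (R : Set V) (hR : IsRootSystem R)
    (f : V →ₗ[ℝ] ℝ) (hf : ∀ α ∈ R, f α ≠ 0)
    (m₀ : ℝ) (hm₀ : IsLeast {x : ℝ | ∃ γ ∈ R, x = ⟪γ, γ⟫} m₀)
    (lam : V) (hlam : ∀ α ∈ posRoots R f, ∃ k : ℕ, 2 * ⟪lam, α⟫ / ⟪α, α⟫ = (k : ℝ))
    (α : V) (hα : α ∈ posRoots R f) (hshort : ⟪α, α⟫ = m₀)
    (k : ℕ) (hk : 2 * ⟪lam, α⟫ / ⟪α, α⟫ = (k : ℝ)) :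
    IsLeast (twistedDecompWeights (posRoots R f) m₀ ((2 * ⟪lam, α⟫ / ⟪α, α⟫) • α)) k := by
  rw [hk]
  -- m₀ > 0
  obtain ⟨γ, hγR, hγ⟩ := hm₀.1
  have hm0pos : 0 < m₀ := by
    rw [hγ, real_inner_self_eq_norm_sq]
    exact pow_pos (norm_pos_iff.2 (hR.ne_zero γ hγR)) 2
  constructor
  · refine ⟨List.replicate k (α, 1), ?_, ?_, ?_⟩
    · intro p hp
      rw [List.eq_of_mem_replicate hp]
      exact ⟨hα, by simpa using hshort⟩
    · simp only [List.map_replicate, List.sum_replicate, smul_eq_mul]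
      exact (Nat.cast_smul_eq_nsmul ℝ k α).symm
    · simp [List.map_replicate, List.sum_replicate]
  · rintro N ⟨l, hl, hsum, hN⟩
    -- each term bound: ⟪p.1, α⟫ ≤ p.2 * m₀
    have hterm : ∀ p ∈ l, ⟪p.1, α⟫ ≤ (p.2 : ℝ) * m₀ := by
      intro p hp
      obtain ⟨hpP, hplen⟩ := hl p hp
      have hβR : p.1 ∈ R := hpP.1
      have hν1 : (1 : ℝ) ≤ (p.2 : ℝ) := by
        have hle : m₀ ≤ ⟪p.1, p.1⟫ := hm₀.2 ⟨p.1, hβR, rfl⟩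
        rw [hplen] at hle
        nlinarith
      have h1 : ⟪p.1, α⟫ ≤ ‖p.1‖ * ‖α‖ := real_inner_le_norm p.1 α
      have h2 : (‖p.1‖ * ‖α‖) ^ 2 ≤ ((p.2 : ℝ) * m₀) ^ 2 := by
        have e1 : ‖p.1‖ ^ 2 = (p.2 : ℝ) * m₀ := by
          rw [← real_inner_self_eq_norm_sq, hplen]
        have e2 : ‖α‖ ^ 2 = m₀ := by
          rw [← real_inner_self_eq_norm_sq, hshort]
        rw [mul_pow, e1, e2]
        nlinarith [mul_pos hm0pos hm0pos]
      have h3 : ‖p.1‖ * ‖α‖ ≤ (p.2 : ℝ) * m₀ := by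
        have hb : (0:ℝ) ≤ (p.2 : ℝ) * m₀ := by positivity
        exact le_of_pow_le_pow_left₀ two_ne_zero hb h2
      linarith
    -- sum bound by induction
    have hsumle : ∀ l' : List (V × ℕ), (∀ p ∈ l', ⟪p.1, α⟫ ≤ (p.2 : ℝ) * m₀) →
        ⟪(l'.map Prod.fst).sum, α⟫ ≤ ((l'.map Prod.snd).sum : ℝ) * m₀ := by
      intro l' hl'
      induction l' with
      | nil => simp
      | cons p t ih =>
        simp only [List.map_cons, List.sum_cons, inner_add_left, Nat.cast_add, add_mul]
        have h1 := hl' p List.mem_cons_self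
        have h2 := ih (fun q hq => hl' q (List.mem_cons_of_mem p hq))
        linarith
    have hfinal := hsumle l hterm
    rw [hsum, hN] at hfinal
    have : ⟪(k : ℝ) • α, α⟫ = (k : ℝ) * m₀ := by
      rw [real_inner_smul_left, hshort]
    rw [this] at hfinal
    have : (k : ℝ) ≤ (N : ℝ) := le_of_mul_le_mul_right (by linarith) hm0pos
    exact_mod_cast this
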